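/- Let r ≥ 2, p ≥ 2 be integers and let 0 ≤ c < 1. For all sufficiently large n and every integer e with 0 ≤ e ≤ c·C(n,r), there exist a nonnegative integer k and an r-uniform hypergraph on n vertices with exactly e edges that is the vertex-disjoint union of a complete r-graph K_k^{(r)} and a p-sparse r-graph on n−k vertices. -/

import Mathlib

open Finset
open scoped Classical

/-- An `r`-graph on `Fin n` is `p`-sparse if every `p` vertices span at most `p` edges. -/
def Sparse (n p : ℕ) (G : Finset (Finset (Fin n))) : Prop :=
  ∀ S : Finset (Fin n), S.card = p → (G.filter (fun t => t ⊆ S)).card ≤ p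

lemma card_filter_superset {α : Type*} [DecidableEq α] (E F : Finset α) (q : ℕ)
    (hFE : F ⊆ E) (hFq : F.card ≤ q) :
    ((E.powersetCard q).filter (fun G => F ⊆ G)).card
      = (E.card - F.card).choose (q - F.card) := by
  rw [show #E - #F = #(E \ F) from (card_sdiff_of_subset hFE).symm,
    ← Finset.card_powersetCard (q - F.card) (E \ F)]
  refine Finset.card_nbij' (fun G => G \ F) (fun G' => G' ∪ F) ?_ ?_ ?_ ?_
  · intro G hG
    obtain ⟨hG1, hG2⟩ := Finset.mem_filter.1 hG
    obtain ⟨hGE, hGq⟩ := Finset.mem_powersetCard.1 hG1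
    exact Finset.mem_powersetCard.2 ⟨Finset.sdiff_subset_sdiff hGE (le_refl F),
      by rw [card_sdiff_of_subset hG2, hGq]⟩
  · intro G' hG'
    obtain ⟨hG'E, hG'c⟩ := Finset.mem_powersetCard.1 hG'
    have hdisj : Disjoint G' F := Finset.disjoint_of_subset_left hG'E sdiff_disjoint
    refine Finset.mem_filter.2 ⟨Finset.mem_powersetCard.2 ⟨?_, ?_⟩, Finset.subset_union_right⟩
    · exact Finset.union_subset (hG'E.trans sdiff_subset) hFE
    · rw [Finset.card_union_of_disjoint hdisj, hG'c]; omega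
  · intro G hG
    exact Finset.sdiff_union_of_subset (Finset.mem_filter.1 hG).2
  · intro G' hG'
    exact Finset.union_sdiff_cancel_right
      (Finset.disjoint_of_subset_left (Finset.mem_powersetCard.1 hG').1 sdiff_disjoint)

lemma sparse_clique_deficit (s : ℕ) : ∀ n k : ℕ, k ≤ n →
    n.choose (s+1) ≤ k.choose (s+1) + (n - k) * (n-1).choose s := by
  intro n
  induction n with
  | zero => intro k hk; simp
  | succ n ih =>
    intro k hk
    rcases eq_or_lt_of_le hk with h | h
    · subst h; simp
    have hk' : k ≤ n := by omega
    calc (n+1).choose (s+1) = n.choose s + n.choose (s+1) := Nat.choose_succ_succ' n s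
      _ ≤ n.choose s + (k.choose (s+1) + (n - k) * (n-1).choose s) :=
          Nat.add_le_add_left (ih k hk') _
      _ ≤ n.choose s + (k.choose (s+1) + (n - k) * n.choose s) := by
          have := Nat.choose_le_choose s (Nat.sub_le n 1)
          exact Nat.add_le_add_left (Nat.add_le_add_left (Nat.mul_le_mul_left _ this) _) _
      _ = k.choose (s+1) + ((n - k) + 1) * n.choose s := by ring
      _ = k.choose (s+1) + (n + 1 - k) * ((n+1)-1).choose s := by
          have h1 : n + 1 - k = (n - k) + 1 := by omega
          have h2 : (n+1) - 1 = n := by omega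
          rw [h1, h2]

lemma sparse_mono {n p : ℕ} {G H : Finset (Finset (Fin n))} (hHG : H ⊆ G)
    (h : Sparse n p G) : Sparse n p H :=
  fun S hS => le_trans (card_le_card (filter_subset_filter _ hHG)) (h S hS)

lemma exists_sparse_big (n r p q : ℕ) (V : Finset (Fin n))
    (hq : q ≤ V.card.choose r) (hpq : p + 1 ≤ q) :
    ∃ (G : Finset (Finset (Fin n))) (b : ℕ),
      G ⊆ V.powersetCard r ∧ Sparse n p G ∧ q ≤ G.card + (p + 1) * b ∧
      b * (V.card.choose r).choose (p + 1)
        ≤ ((p + 1) * (V.card + 1) ^ p * 2 ^ 2 ^ p) * q.choose (p + 1) := by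
  classical
  set E := V.powersetCard r with hE
  have hEcard : E.card = V.card.choose r := card_powersetCard r V
  have hqE : q ≤ E.card := by rw [hEcard]; exact hq
  have hΩne : (E.powersetCard q).Nonempty := by
    rw [← card_pos, card_powersetCard]
    exact Nat.choose_pos hqE
  obtain ⟨G, hGΩ, hGmin⟩ :=
    (E.powersetCard q).exists_min_image
      (fun G => (((E.powersetCard (p+1)).filter (fun F => (F.sup id).card ≤ p)).filter
        (fun F => F ⊆ G)).card) hΩne
  set badF := (E.powersetCard (p+1)).filter (fun F => (F.sup id).card ≤ p) with hbadF
  obtain ⟨hGE, hGq⟩ := Finset.mem_powersetCard.1 hGΩ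
  set bad := badF.filter (fun F => F ⊆ G) with hbad
  have hcount : (E.card.choose q) * bad.card
      ≤ badF.card * ((E.card - (p+1)).choose (q - (p+1))) := by
    calc (E.card.choose q) * bad.card
        = ∑ _G' ∈ E.powersetCard q, bad.card := by
          rw [sum_const, smul_eq_mul, Finset.card_powersetCard q E]
      _ ≤ ∑ G' ∈ E.powersetCard q,
            (badF.filter (fun F => F ⊆ G')).card := sum_le_sum (fun G' hG' => hGmin G' hG')
      _ = ∑ G' ∈ E.powersetCard q, ∑ F ∈ badF, if F ⊆ G' then 1 else 0 := by
          simp only [Finset.card_filter]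
      _ = ∑ F ∈ badF, ∑ G' ∈ E.powersetCard q, if F ⊆ G' then 1 else 0 := Finset.sum_comm
      _ = ∑ F ∈ badF, ((E.powersetCard q).filter (fun G' => F ⊆ G')).card := by
          simp only [Finset.card_filter]
      _ = ∑ F ∈ badF, (E.card - (p+1)).choose (q - (p+1)) := by
          refine Finset.sum_congr rfl (fun F hF => ?_)
          obtain ⟨hF1, _hF2⟩ := Finset.mem_filter.1 hF
          obtain ⟨hFE, hFc⟩ := Finset.mem_powersetCard.1 hF1
          rw [card_filter_superset E F q hFE (by omega), hFc]
      _ = badF.card * ((E.card - (p+1)).choose (q - (p+1))) := by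
          rw [sum_const, smul_eq_mul]
  have hbadFcard : badF.card ≤ (p + 1) * (V.card + 1) ^ p * 2 ^ 2 ^ p := by
    have hsub : badF ⊆ ((V.powerset).filter (fun U => U.card ≤ p)).biUnion
        (fun U => U.powerset.powerset) := by
      intro F hF
      obtain ⟨hF1, hF2⟩ := Finset.mem_filter.1 hF
      obtain ⟨hFE, _hFc⟩ := Finset.mem_powersetCard.1 hF1
      refine Finset.mem_biUnion.2 ⟨F.sup id, Finset.mem_filter.2
        ⟨Finset.mem_powerset.2 ?_, hF2⟩, ?_⟩
      · exact Finset.sup_le (fun t ht => (Finset.mem_powersetCard.1 (hFE ht)).1)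
      · exact Finset.mem_powerset.2 (fun t ht => Finset.mem_powerset.2 (Finset.le_sup (f := id) ht))
    have h1 : badF.card ≤ ∑ U ∈ (V.powerset).filter (fun U => U.card ≤ p),
        (U.powerset.powerset).card :=
      le_trans (card_le_card hsub) (Finset.card_biUnion_le)
    have h2 : ∀ U ∈ (V.powerset).filter (fun U => U.card ≤ p),
        (U.powerset.powerset).card ≤ 2 ^ 2 ^ p := by
      intro U hU
      rw [Finset.card_powerset, Finset.card_powerset]
      exact Nat.pow_le_pow_right (by norm_num)
        (Nat.pow_le_pow_right (by norm_num) (Finset.mem_filter.1 hU).2)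
    have h3 : ((V.powerset).filter (fun U => U.card ≤ p)).card ≤ (p + 1) * (V.card + 1) ^ p := by
      have hsub2 : (V.powerset).filter (fun U => U.card ≤ p) ⊆
          (Finset.range (p+1)).biUnion (fun i => V.powersetCard i) := by
        intro U hU
        obtain ⟨hU1, hU2⟩ := Finset.mem_filter.1 hU
        exact Finset.mem_biUnion.2 ⟨U.card, Finset.mem_range.2 (by omega),
          Finset.mem_powersetCard.2 ⟨Finset.mem_powerset.1 hU1, rfl⟩⟩
      calc ((V.powerset).filter (fun U => U.card ≤ p)).card
          ≤ ∑ i ∈ Finset.range (p+1), (V.powersetCard i).card :=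
            le_trans (card_le_card hsub2) Finset.card_biUnion_le
        _ ≤ ∑ _i ∈ Finset.range (p+1), (V.card + 1) ^ p := by
            refine sum_le_sum (fun i hi => ?_)
            rw [card_powersetCard]
            calc (V.card.choose i) ≤ V.card ^ i := Nat.choose_le_pow _ _
              _ ≤ (V.card + 1) ^ i := Nat.pow_le_pow_left (by omega) _
              _ ≤ (V.card + 1) ^ p := Nat.pow_le_pow_right (by omega)
                  (Nat.lt_succ_iff.1 (Finset.mem_range.1 hi))
        _ = (p + 1) * (V.card + 1) ^ p := by rw [sum_const, card_range, smul_eq_mul]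
    calc badF.card ≤ ∑ _U ∈ (V.powerset).filter (fun U => U.card ≤ p), 2 ^ 2 ^ p :=
          le_trans h1 (sum_le_sum h2)
      _ = ((V.powerset).filter (fun U => U.card ≤ p)).card * 2 ^ 2 ^ p := by
          rw [sum_const, smul_eq_mul]
      _ ≤ (p + 1) * (V.card + 1) ^ p * 2 ^ 2 ^ p := Nat.mul_le_mul_right _ h3
  have hXpos : 0 < (E.card - (p+1)).choose (q - (p+1)) :=
    Nat.choose_pos (by omega)
  have hkey : bad.card * (V.card.choose r).choose (p+1)
      ≤ ((p + 1) * (V.card + 1) ^ p * 2 ^ 2 ^ p) * q.choose (p+1) := by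
    set X := (E.card - (p+1)).choose (q - (p+1)) with hX
    have hcm : E.card.choose q * q.choose (p+1) = E.card.choose (p+1) * X :=
      Nat.choose_mul hpq
    refine Nat.le_of_mul_le_mul_right ?_ hXpos
    calc bad.card * (V.card.choose r).choose (p+1) * X
        = bad.card * ((E.card.choose q * q.choose (p+1))) := by
          rw [← hEcard, mul_assoc, ← hcm]
      _ = (E.card.choose q * bad.card) * q.choose (p+1) := by ring
      _ ≤ (badF.card * X) * q.choose (p+1) := Nat.mul_le_mul_right _ hcount
      _ ≤ (((p + 1) * (V.card + 1) ^ p * 2 ^ 2 ^ p) * X) * q.choose (p+1) :=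
          Nat.mul_le_mul_right _ (Nat.mul_le_mul_right _ hbadFcard)
      _ = ((p + 1) * (V.card + 1) ^ p * 2 ^ 2 ^ p) * q.choose (p+1) * X := by ring
  set Del := bad.biUnion id with hDel
  refine ⟨G \ Del, bad.card, (sdiff_subset).trans hGE, ?_, ?_, hkey⟩
  · intro S hS
    by_contra hlt
    push_neg at hlt
    obtain ⟨F, hFsub, hFcard⟩ := Finset.exists_subset_card_eq (show p + 1 ≤ _ from hlt)
    have hFG' : F ⊆ G \ Del := hFsub.trans (filter_subset _ _)
    have hFbad : F ∈ bad := by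
      refine Finset.mem_filter.2 ⟨Finset.mem_filter.2 ⟨Finset.mem_powersetCard.2
        ⟨(hFG'.trans sdiff_subset).trans hGE, hFcard⟩, ?_⟩, hFG'.trans sdiff_subset⟩
      have hsupS : F.sup id ⊆ S :=
        Finset.sup_le (fun t ht => (Finset.mem_filter.1 (hFsub ht)).2)
      exact le_trans (card_le_card hsupS) (le_of_eq hS)
    obtain ⟨t, ht⟩ : F.Nonempty := card_pos.1 (by omega)
    have htDel : t ∈ Del := Finset.mem_biUnion.2 ⟨F, hFbad, ht⟩
    exact (Finset.mem_sdiff.1 (hFG' ht)).2 htDel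
  · have hsplit : G ⊆ (G \ Del) ∪ Del := by
      intro a ha
      by_cases h : a ∈ Del
      · exact Finset.mem_union_right _ h
      · exact Finset.mem_union_left _ (Finset.mem_sdiff.2 ⟨ha, h⟩)
    have hDelcard : Del.card ≤ (p + 1) * bad.card := by
      calc Del.card ≤ ∑ F ∈ bad, (id F).card := Finset.card_biUnion_le
        _ = ∑ F ∈ bad, (p+1) := by
            refine Finset.sum_congr rfl (fun F hF => ?_)
            exact (Finset.mem_powersetCard.1 (Finset.mem_filter.1
              (Finset.mem_filter.1 hF).1).1).2
        _ = bad.card * (p+1) := by rw [sum_const, smul_eq_mul]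
        _ = (p+1) * bad.card := by ring
    calc q = G.card := hGq.symm
      _ ≤ ((G \ Del) ∪ Del).card := card_le_card hsplit
      _ ≤ (G \ Del).card + Del.card := card_union_le _ _
      _ ≤ (G \ Del).card + (p + 1) * bad.card := by omega

/-- Every pair `(n,e)` with `e ≤ c·C(n,r)` can be realised, for large `n`, as the
vertex-disjoint union of a clique `K_k^{(r)}` and a `p`-sparse `r`-graph on `n-k` vertices. -/
theorem realise_clique_plus_sparse (r p : ℕ) (hr : 2 ≤ r) (hp : 2 ≤ p)
    (c : ℝ) (hc0 : 0 ≤ c) (hc1 : c < 1) :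
    ∃ N : ℕ, ∀ n ≥ N, ∀ e : ℕ, (e : ℝ) ≤ c * (n.choose r : ℝ) →
      ∃ (k : ℕ) (K : Finset (Fin n)) (H : Finset (Finset (Fin n))),
        K.card = k ∧ (∀ s ∈ H, s.card = r ∧ Disjoint s K) ∧ Sparse n p H ∧
        k.choose r + H.card = e := by
  obtain ⟨rr, rfl⟩ : ∃ rr, r = rr + 2 := ⟨r - 2, by omega⟩
  have hc1' : (0:ℝ) < 1 - c := by linarith
  set D : ℕ := ⌈((rr:ℝ) + 2) / (1 - c)⌉₊ + 1 with hD
  have hDpos : 0 < D := by omega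
  have hrD : ((rr:ℝ) + 2) < D * (1 - c) := by
    have h1 : ((rr:ℝ)+2)/(1-c) ≤ (⌈((rr:ℝ)+2)/(1-c)⌉₊ : ℝ) := Nat.le_ceil _
    have h2 : ((⌈((rr:ℝ)+2)/(1-c)⌉₊ : ℝ)) < D := by rw [hD]; push_cast; linarith
    have h3 := lt_of_le_of_lt h1 h2
    calc (rr:ℝ)+2 = (((rr:ℝ)+2)/(1-c)) * (1-c) := by field_simp
      _ < D * (1-c) := mul_lt_mul_of_pos_right h3 hc1'
  set C1 : ℕ := (p+1) * 2^p * 2^(2^p) with hC1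
  set C3 : ℕ := 2*(p+1)*C1*2^(p+1) with hC3
  set C4 : ℕ := D^(rr+2) * 2^(rr+2) * (rr+2).factorial with hC4
  set C5 : ℕ := 2^(p+1) * (p+1).factorial with hC5
  set C6 : ℕ := C4^(p+1) * C5 with hC6
  have hC4pos : 0 < C4 := by
    rw [hC4]; positivity
  have hC6pos : 0 < C6 := by
    rw [hC6, hC5]; positivity
  set A1 := C3 * C6 with hA1
  set A2 := 2*(rr+2)*D with hA2
  set A3 := 2*(p+1)*C4 with hA3
  set A4 := 2*C4 with hA4
  refine ⟨A1 + A2 + A3 + A4 + p + rr + 4, fun n hn e he => ?_⟩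
  have hn1 : 1 ≤ n := by omega
  have hnr : rr + 2 ≤ n := by omega
  have hCn_pos : 0 < n.choose (rr+2) := Nat.choose_pos hnr
  have hCnR : (0:ℝ) < (n.choose (rr+2) : ℝ) := by exact_mod_cast hCn_pos
  have he' : e < n.choose (rr+2) := by
    have h1 : (e:ℝ) < (n.choose (rr+2) : ℝ) := by nlinarith
    exact_mod_cast h1
  -- greedy choice of k
  set k := Nat.findGreatest (fun k => k.choose (rr+2) ≤ e) n with hk
  have hk_le_n : k ≤ n := Nat.findGreatest_le n
  have hkP : k.choose (rr+2) ≤ e := by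
    rw [hk]
    exact Nat.findGreatest_spec (P := fun k => k.choose (rr+2) ≤ e) (m := 0) (Nat.zero_le n)
      (by show Nat.choose 0 (rr+2) ≤ e; rw [Nat.choose_eq_zero_of_lt (by omega)]; exact Nat.zero_le e)
  have hk_lt : k < n := lt_of_le_of_ne hk_le_n (fun h => by rw [h] at hkP; omega)
  have hk1 : e < (k+1).choose (rr+2) := by
    by_contra hcon
    push_neg at hcon
    exact Nat.findGreatest_is_greatest (P := fun k => k.choose (rr+2) ≤ e) (n := n)
      (by omega) (by omega) hcon
  set g := e - k.choose (rr+2) with hg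
  have hgap : g < k.choose (rr+1) := by
    have hps : (k+1).choose (rr+2) = k.choose (rr+1) + k.choose (rr+2) :=
      Nat.choose_succ_succ' k (rr+1)
    omega
  set T := n^(rr+1) with hT
  have hgT : g < T := lt_of_lt_of_le hgap
    (le_trans (Nat.choose_le_choose _ hk_le_n) (Nat.choose_le_pow _ _))
  set m := n - k with hm
  have hm_le : m ≤ n := Nat.sub_le n k
  -- n ≤ D * m
  have hDm : n ≤ D * m := by
    by_contra hcon
    push_neg at hcon
    have hdef : n.choose (rr+2) ≤ k.choose (rr+2) + m * (n-1).choose (rr+1) :=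
      sparse_clique_deficit (rr+1) n k (le_of_lt hk_lt)
    have hid : n * (n-1).choose (rr+1) = (n.choose (rr+2)) * (rr+2) := by
      have h := Nat.add_one_mul_choose_eq (n-1) (rr+1)
      have hn' : n - 1 + 1 = n := by omega
      rw [hn'] at h
      exact h
    have hfdef : ((n.choose (rr+2) : ℝ)) ≤ (k.choose (rr+2) : ℝ)
        + (m:ℝ) * (((n-1).choose (rr+1) : ℕ) : ℝ) := by exact_mod_cast hdef
    have hfid : (n:ℝ) * (((n-1).choose (rr+1) : ℕ):ℝ)
        = (n.choose (rr+2):ℝ) * ((rr:ℝ)+2) := by exact_mod_cast hid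
    have hfcon : (D:ℝ) * (m:ℝ) < (n:ℝ) := by exact_mod_cast hcon
    have hkR : ((k.choose (rr+2)):ℝ) ≤ (e:ℝ) := by exact_mod_cast hkP
    set X : ℝ := (((n-1).choose (rr+1) : ℕ) : ℝ) with hXdef
    have hm0 : (0:ℝ) ≤ (m:ℝ) := by positivity
    have hn0 : (0:ℝ) < (n:ℝ) := by exact_mod_cast hn1
    have h2 : (m:ℝ) * ((rr:ℝ)+2) < (n:ℝ) * (1-c) := by
      calc (m:ℝ)*((rr:ℝ)+2) ≤ (m:ℝ)*((D:ℝ)*(1-c)) :=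
            mul_le_mul_of_nonneg_left (le_of_lt hrD) hm0
        _ = ((D:ℝ)*(m:ℝ))*(1-c) := by ring
        _ < (n:ℝ)*(1-c) := mul_lt_mul_of_pos_right hfcon hc1'
    have h3 : (n:ℝ) * ((m:ℝ)*X) < (n:ℝ) * ((1-c) * (n.choose (rr+2):ℝ)) := by
      have haux : (m:ℝ)*X*(n:ℝ) = (m:ℝ)*((rr:ℝ)+2)*(n.choose (rr+2):ℝ) := by
        calc (m:ℝ)*X*(n:ℝ) = (m:ℝ)*((n:ℝ)*X) := by ring
          _ = (m:ℝ)*((n.choose (rr+2):ℝ)*((rr:ℝ)+2)) := by rw [hfid]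
          _ = (m:ℝ)*((rr:ℝ)+2)*(n.choose (rr+2):ℝ) := by ring
      calc (n:ℝ)*((m:ℝ)*X) = (m:ℝ)*X*(n:ℝ) := by ring
        _ = (m:ℝ)*((rr:ℝ)+2)*(n.choose (rr+2):ℝ) := haux
        _ < ((n:ℝ)*(1-c))*(n.choose (rr+2):ℝ) := mul_lt_mul_of_pos_right h2 hCnR
        _ = (n:ℝ)*((1-c)*(n.choose (rr+2):ℝ)) := by ring
    have h4 : (m:ℝ)*X < (1-c)*(n.choose (rr+2):ℝ) :=
      lt_of_mul_lt_mul_left h3 (le_of_lt hn0)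
    have : (n.choose (rr+2):ℝ) < (n.choose (rr+2):ℝ) := by
      calc (n.choose (rr+2):ℝ) ≤ (k.choose (rr+2):ℝ) + (m:ℝ)*X := hfdef
        _ ≤ c*(n.choose (rr+2):ℝ) + (m:ℝ)*X := by linarith [hkR.trans he]
        _ < c*(n.choose (rr+2):ℝ) + (1-c)*(n.choose (rr+2):ℝ) := by linarith
        _ = (n.choose (rr+2):ℝ) := by ring
    exact lt_irrefl _ this
  have hm2r : 2*(rr+2) ≤ m := by
    refine Nat.le_of_mul_le_mul_left ?_ hDpos
    calc D * (2*(rr+2)) = 2*(rr+2)*D := by ring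
      _ ≤ n := by omega
      _ ≤ D * m := hDm
  set q := 2*T with hqdef
  have hnle : n ≤ n^(rr+2) := Nat.le_self_pow (by omega) n
  have hTn : T*n = n^(rr+2) := by rw [hT, ← pow_succ]
  have hpq : p + 1 ≤ q := by
    have hTge : n ≤ T := by rw [hT]; exact Nat.le_self_pow (by omega) n
    omega
  set M := m.choose (rr+2) with hM
  have h41 : (m+1-(rr+2))^(rr+2) ≤ (rr+2).factorial * M := by
    rw [hM, ← Nat.descFactorial_eq_factorial_mul_choose]
    exact Nat.pow_sub_le_descFactorial m (rr+2)
  have h42 : m^(rr+2) ≤ 2^(rr+2) * (m+1-(rr+2))^(rr+2) := by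
    calc m^(rr+2) ≤ (2*(m+1-(rr+2)))^(rr+2) := Nat.pow_le_pow_left (by omega) _
      _ = 2^(rr+2) * (m+1-(rr+2))^(rr+2) := mul_pow 2 _ _
  have hM1 : n^(rr+2) ≤ C4 * M := by
    calc n^(rr+2) ≤ (D*m)^(rr+2) := Nat.pow_le_pow_left hDm _
      _ = D^(rr+2) * m^(rr+2) := mul_pow D m _
      _ ≤ D^(rr+2) * (2^(rr+2) * ((rr+2).factorial * M)) :=
          Nat.mul_le_mul_left _ (le_trans h42 (Nat.mul_le_mul_left _ h41))
      _ = C4 * M := by rw [hC4]; ring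
  have hqM : q ≤ M := by
    refine Nat.le_of_mul_le_mul_left ?_ hC4pos
    calc C4 * q = 2*C4*T := by rw [hqdef]; ring
      _ ≤ n*T := Nat.mul_le_mul_right _ (by omega)
      _ = n^(rr+2) := by rw [mul_comm]; exact hTn
      _ ≤ C4 * M := hM1
  have hM2p : 2*(p+1) ≤ M := by
    refine Nat.le_of_mul_le_mul_left ?_ hC4pos
    calc C4 * (2*(p+1)) = 2*(p+1)*C4 := by ring
      _ ≤ n := by omega
      _ ≤ n^(rr+2) := hnle
      _ ≤ C4*M := hM1
  have hMcpos : 0 < M.choose (p+1) := Nat.choose_pos (by omega)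
  have h51 : (M-p)^(p+1) ≤ (p+1).factorial * M.choose (p+1) := by
    have hrw : M - p = M + 1 - (p+1) := by omega
    rw [hrw, ← Nat.descFactorial_eq_factorial_mul_choose]
    exact Nat.pow_sub_le_descFactorial M (p+1)
  have hM2 : M^(p+1) ≤ C5 * M.choose (p+1) := by
    calc M^(p+1) ≤ (2*(M-p))^(p+1) := Nat.pow_le_pow_left (by omega) _
      _ = 2^(p+1) * (M-p)^(p+1) := mul_pow _ _ _
      _ ≤ 2^(p+1) * ((p+1).factorial * M.choose (p+1)) := Nat.mul_le_mul_left _ h51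
      _ = C5 * M.choose (p+1) := by rw [hC5]; ring
  have hKey2 : n^((rr+2)*(p+1)) ≤ C6 * M.choose (p+1) := by
    calc n^((rr+2)*(p+1)) = (n^(rr+2))^(p+1) := pow_mul n _ _
      _ ≤ (C4*M)^(p+1) := Nat.pow_le_pow_left hM1 _
      _ = C4^(p+1) * M^(p+1) := mul_pow _ _ _
      _ ≤ C4^(p+1) * (C5 * M.choose (p+1)) := Nat.mul_le_mul_left _ hM2
      _ = C6 * M.choose (p+1) := by rw [hC6]; ring
  -- clique vertex set
  obtain ⟨K, hKuniv, hKcard⟩ := Finset.exists_subset_card_eq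
    (show k ≤ (Finset.univ : Finset (Fin n)).card by
      rw [card_univ, Fintype.card_fin]; exact hk_le_n)
  set V := (Finset.univ : Finset (Fin n)) \ K with hV
  have hVcard : V.card = m := by
    rw [hV, card_sdiff_of_subset (subset_univ K), card_univ, Fintype.card_fin, hKcard]
  obtain ⟨G, b, hGsub, hGsp, hGlow, hGbound⟩ :=
    exists_sparse_big n (rr+2) p q V (by rw [hVcard]; exact hqM) hpq
  rw [hVcard] at hGbound
  -- key numerical inequality
  have hBn : (p+1)*(m+1)^p*2^(2^p) ≤ C1 * n^p := by
    have h1 : (m+1)^p ≤ (2*n)^p := Nat.pow_le_pow_left (by omega) p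
    calc (p+1)*(m+1)^p*2^(2^p) ≤ (p+1)*(2*n)^p*2^(2^p) :=
          Nat.mul_le_mul_right _ (Nat.mul_le_mul_left _ h1)
      _ = C1 * n^p := by rw [hC1, mul_pow]; ring
  have hCq : q.choose (p+1) ≤ 2^(p+1) * T^(p+1) := by
    calc q.choose (p+1) ≤ q^(p+1) := Nat.choose_le_pow q (p+1)
      _ = 2^(p+1)*T^(p+1) := by rw [hqdef]; exact mul_pow 2 T (p+1)
  have hkeyineq : 2*(p+1)*((p+1)*(m+1)^p*2^(2^p)) * q.choose (p+1) ≤ q * M.choose (p+1) := by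
    refine Nat.le_of_mul_le_mul_left ?_ hC6pos
    calc C6 * (2*(p+1)*((p+1)*(m+1)^p*2^(2^p)) * q.choose (p+1))
        ≤ C6 * (2*(p+1)*(C1*n^p) * (2^(p+1)*T^(p+1))) :=
          Nat.mul_le_mul_left _ (Nat.mul_le_mul (Nat.mul_le_mul_left _ hBn) hCq)
      _ = (C3*C6) * (n^p * T^(p+1)) := by rw [hC3]; ring
      _ = (C3*C6) * n^(p + (rr+1)*(p+1)) := by rw [hT, ← pow_mul, ← pow_add]
      _ ≤ n^(rr+2) * n^(p + (rr+1)*(p+1)) := Nat.mul_le_mul_right _ (le_trans (by omega) hnle)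
      _ = n^(rr+1) * n^((rr+2)*(p+1)) := by rw [← pow_add, ← pow_add]; congr 1; ring
      _ ≤ T * (C6 * M.choose (p+1)) := by rw [hT]; exact Nat.mul_le_mul_left _ hKey2
      _ ≤ 2 * (T * (C6 * M.choose (p+1))) := Nat.le_mul_of_pos_left _ (by norm_num)
      _ = C6 * (q * M.choose (p+1)) := by rw [hqdef]; ring
  have hbT : (p+1)*b ≤ T := by
    refine Nat.le_of_mul_le_mul_right ?_ hMcpos
    have hstep : (p+1)*(((p+1)*(m+1)^p*2^(2^p)) * q.choose (p+1)) ≤ T * M.choose (p+1) := by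
      refine Nat.le_of_mul_le_mul_left ?_ (show 0 < 2 by norm_num)
      calc 2*((p+1)*(((p+1)*(m+1)^p*2^(2^p)) * q.choose (p+1)))
          = 2*(p+1)*((p+1)*(m+1)^p*2^(2^p)) * q.choose (p+1) := by ring
        _ ≤ q * M.choose (p+1) := hkeyineq
        _ = 2*(T*M.choose (p+1)) := by rw [hqdef]; ring
    calc (p+1)*b*M.choose (p+1) = (p+1)*(b*M.choose (p+1)) := by ring
      _ ≤ (p+1)*(((p+1)*(m+1)^p*2^(2^p)) * q.choose (p+1)) := Nat.mul_le_mul_left _ hGbound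
      _ ≤ T * M.choose (p+1) := hstep
  have hGcard : g ≤ G.card := by
    have h1 : q ≤ G.card + T := le_trans hGlow (Nat.add_le_add_left hbT _)
    omega
  obtain ⟨H, hHG, hHcard⟩ := Finset.exists_subset_card_eq hGcard
  refine ⟨k, K, H, hKcard, ?_, sparse_mono hHG hGsp, ?_⟩
  · intro s hs
    have hsV := hGsub (hHG hs)
    obtain ⟨hsV1, hsc⟩ := Finset.mem_powersetCard.1 hsV
    exact ⟨hsc, Finset.disjoint_of_subset_left hsV1 sdiff_disjoint⟩
  · rw [hHcard, hg]
    omega
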